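/- arXiv:2602.06257 — 2 statements merged into one kernel-verified Lean document; each statement's English description precedes it below -/
import Mathlib

section
/- Fix n ≥ 1, ε > 0 with n·ε ≤ 1, η > 0 and ν = 1/16. Let Δ_{n,ε} := {q : Fin n → ℝ : ∑_i q i = 1 and q i ≥ ε for all i}, and R_{η,ν}(q) := (1/η)·∑_i q i · log(q i) − (1/ν)·∑_i log(q i). Let D : Fin n → ℝ and let p ∈ Δ_{n,ε} be a minimizer over Δ_{n,ε} of F(q) := ∑_i D i · q i + R_{η,ν}(q). Let R ⊆ Fin n, y ∈ {−1, 1}, q₀ := ∑_{i∈R} p i, and let d̂ : Fin n → ℝ be either identically 0, or (with R nonempty, so q₀ > 0) d̂ i = y/q₀ if i ∈ R and d̂ i = 0 otherwise. If p' ∈ Δ_{n,ε} is a minimizer over Δ_{n,ε} of F(q) + ∑_i d̂ i · q i, then p' i ≤ 2 · p i for all i ∈ Fin n. -/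
open Finset

/-- The `ε`-shrunk probability simplex over `Fin n`. -/
def shrunkSimplex (n : ℕ) (ε : ℝ) : Set (Fin n → ℝ) :=
  {q | (∑ i, q i) = 1 ∧ ∀ i, ε ≤ q i}

/-- The negative-entropy plus log-barrier regularizer `R_{η,ν}`. -/
noncomputable def ftrlReg (n : ℕ) (η ν : ℝ) (q : Fin n → ℝ) : ℝ :=
  (1 / η) * ∑ i, q i * Real.log (q i) - (1 / ν) * ∑ i, Real.log (q i)

/-- The FTRL objective `F(q) = ⟨D, q⟩ + R_{η,ν}(q)`. -/
noncomputable def ftrlObj (n : ℕ) (η ν : ℝ) (D : Fin n → ℝ) (q : Fin n → ℝ) : ℝ :=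
  (∑ i, D i * q i) + ftrlReg n η ν q

lemma slope_nonneg {f : ℝ → ℝ} {c : ℝ} (hf : HasDerivAt f c 0)
    (hmin : ∀ t ∈ Set.Icc (0:ℝ) 1, f 0 ≤ f t) : 0 ≤ c := by
  have h := (hf.hasDerivWithinAt (s := Set.Ioi (0:ℝ)))
  rw [hasDerivWithinAt_iff_tendsto_slope] at h
  have hs : Set.Ioi (0:ℝ) \ {0} = Set.Ioi 0 :=
    Set.diff_singleton_eq_self (by simp)
  rw [hs] at h
  refine ge_of_tendsto h ?_
  filter_upwards [Ioo_mem_nhdsGT_of_mem (by norm_num : (0:ℝ) ∈ Set.Ico 0 1)] with t ht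
  have ht0 : 0 < t := ht.1
  have hle := hmin t ⟨le_of_lt ht.1, le_of_lt ht.2⟩
  rw [slope_def_field]
  apply div_nonneg <;> simp <;> linarith

lemma grad_cond (n : ℕ) (ε η ν : ℝ) (hε : 0 < ε) (hη : 0 < η) (hν : 0 < ν)
    (c : Fin n → ℝ) (p : Fin n → ℝ) (hp : p ∈ shrunkSimplex n ε)
    (hmin : ∀ q ∈ shrunkSimplex n ε,
      (∑ i, c i * p i) + ftrlReg n η ν p ≤ (∑ i, c i * q i) + ftrlReg n η ν q)
    (q : Fin n → ℝ) (hq : q ∈ shrunkSimplex n ε) :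
    0 ≤ ∑ i, (c i + (1/η) * (Real.log (p i) + 1) - (1/ν) * (1 / p i)) * (q i - p i) := by
  set v : Fin n → ℝ := fun i => q i - p i with hv
  have hppos : ∀ i, 0 < p i := fun i => lt_of_lt_of_le hε (hp.2 i)
  have hf : ∀ i, HasDerivAt (fun t : ℝ => p i + t * v i) (v i) 0 :=
    fun i => (((hasDerivAt_id (0:ℝ)).mul_const (v i)).const_add (p i)).congr_deriv (by ring)
  have hval : ∀ i, p i + (0:ℝ) * v i = p i := fun i => by ring
  have hpos0 : ∀ i, p i + (0:ℝ) * v i ≠ 0 := fun i => by rw [hval i]; exact (hppos i).ne'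
  have h1 : HasDerivAt (fun t : ℝ => ∑ i, c i * (p i + t * v i)) (∑ i, c i * v i) 0 :=
    HasDerivAt.fun_sum (fun i _ => (hf i).const_mul (c i))
  have h2 : HasDerivAt (fun t : ℝ => ∑ i, (p i + t * v i) * Real.log (p i + t * v i))
      (∑ i, (v i * Real.log (p i + 0 * v i) + (p i + 0 * v i) * (v i / (p i + 0 * v i)))) 0 :=
    HasDerivAt.fun_sum (fun i _ => (hf i).mul ((hf i).log (hpos0 i)))
  have h3 : HasDerivAt (fun t : ℝ => ∑ i, Real.log (p i + t * v i))
      (∑ i, v i / (p i + 0 * v i)) 0 :=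
    HasDerivAt.fun_sum (fun i _ => (hf i).log (hpos0 i))
  have hg : HasDerivAt
      (fun t : ℝ => (∑ i, c i * (p i + t * v i)) +
        ((1/η) * ∑ i, (p i + t * v i) * Real.log (p i + t * v i)
          - (1/ν) * ∑ i, Real.log (p i + t * v i)))
      ((∑ i, c i * v i) +
        ((1/η) * ∑ i, (v i * Real.log (p i + 0 * v i) + (p i + 0 * v i) * (v i / (p i + 0 * v i)))
          - (1/ν) * ∑ i, v i / (p i + 0 * v i))) 0 :=
    h1.add ((h2.const_mul (1/η)).sub (h3.const_mul (1/ν)))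
  have key := slope_nonneg hg ?_
  · refine le_trans key (le_of_eq ?_)
    rw [Finset.mul_sum, Finset.mul_sum, ← Finset.sum_sub_distrib, ← Finset.sum_add_distrib]
    refine Finset.sum_congr rfl fun i _ => ?_
    rw [hval i]
    have hne : p i ≠ 0 := (hppos i).ne'
    field_simp
    ring
  · intro t ht
    have hmem : (fun i => p i + t * v i) ∈ shrunkSimplex n ε := by
      constructor
      · have h1 : ∑ i, (p i + t * v i) = (∑ i, p i) + t * ((∑ i, q i) - ∑ i, p i) := by
          rw [Finset.sum_add_distrib, mul_sub, Finset.mul_sum, Finset.mul_sum]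
          congr 1
          rw [← Finset.sum_sub_distrib]
          exact Finset.sum_congr rfl fun i _ => by simp [hv]; ring
        rw [h1, hp.1, hq.1]; ring
      · intro i
        show ε ≤ p i + t * v i
        have h1 : p i + t * v i = (1 - t) * p i + t * q i := by simp [hv]; ring
        rw [h1]
        have := hp.2 i; have := hq.2 i
        nlinarith [ht.1, ht.2]
    have := hmin _ hmem
    simpa [ftrlReg, hval] using this

lemma aux_T8 (a b : ℝ) (ha : 0 < a) (h : 2*a < b) : 8 < 16*((b-a)^2/(a*b)) := by
  have hb : 0 < b := by linarith
  rw [mul_div_assoc', lt_div_iff₀ (by positivity)]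
  nlinarith [mul_pos ha (show 0 < b - 2*a by linarith), sq_nonneg (b - 2*a)]

lemma aux_claim1 (a b q₀ : ℝ) (ha : 0 < a) (hb : 0 < b) (hq : 0 < q₀) (hle : a ≤ q₀) :
    (b - a)/q₀ - 16*((b-a)^2/(a*b)) ≤ a/(15*q₀) := by
  have hTnn : 0 ≤ 16*((b-a)^2/(a*b)) := by positivity
  have hplast : 0 ≤ a/(15*q₀) := by positivity
  rcases le_or_gt (b - a) 0 with hδ | hδ
  · have : (b - a)/q₀ ≤ 0 := div_nonpos_of_nonpos_of_nonneg hδ hq.le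
    linarith
  · rcases le_or_gt b (16 * (b - a)) with h16 | h16
    · have : (b - a)/q₀ ≤ 16*((b-a)^2/(a*b)) := by
        rw [mul_div_assoc', div_le_div_iff₀ hq (by positivity)]
        nlinarith [mul_le_mul_of_nonneg_left h16 (by positivity : (0:ℝ) ≤ (b-a)*a),
          mul_le_mul_of_nonneg_left hle (by positivity : (0:ℝ) ≤ 16*(b-a)^2)]
      linarith
    · have h15 : b - a ≤ a / 15 := by linarith
      have : (b - a)/q₀ ≤ (a/15)/q₀ := by gcongr
      rw [div_div] at this
      linarith

lemma aux_strong (a b q₀ : ℝ) (ha : 0 < a) (hcon : 2*a < b) (hle : a ≤ q₀) :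
    (b - a)/q₀ - 16*((b-a)^2/(a*b)) ≤ -7 := by
  have hb : 0 < b := by linarith
  have hq : 0 < q₀ := lt_of_lt_of_le ha hle
  have e1 : (b - a)/q₀ ≤ (b - a)/a := by gcongr; linarith
  have e2 : (b - a)/a + 7 ≤ 16*((b-a)^2/(a*b)) := by
    rw [mul_div_assoc', div_add' _ _ _ ha.ne', div_le_div_iff₀ ha (by positivity)]
    nlinarith [mul_pos ha (show 0 < b - 2*a by linarith), sq_nonneg (b-2*a)]
  linarith

theorem stmt12 (n : ℕ) (hn : 1 ≤ n) (ε η ν : ℝ)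
    (hε : 0 < ε) (hnε : (n : ℝ) * ε ≤ 1) (hη : 0 < η) (hν : ν = 1 / 16)
    (D : Fin n → ℝ)
    (p : Fin n → ℝ) (hp : p ∈ shrunkSimplex n ε)
    (hpmin : ∀ q ∈ shrunkSimplex n ε, ftrlObj n η ν D p ≤ ftrlObj n η ν D q)
    (R : Finset (Fin n)) (y : ℝ) (hy : y = -1 ∨ y = 1)
    (dhat : Fin n → ℝ)
    (hdhat : dhat = (fun _ => 0) ∨
      (R.Nonempty ∧ dhat = fun i => if i ∈ R then y / (∑ j ∈ R, p j) else 0))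
    (p' : Fin n → ℝ) (hp' : p' ∈ shrunkSimplex n ε)
    (hp'min : ∀ q ∈ shrunkSimplex n ε,
      ftrlObj n η ν D p' + ∑ i, dhat i * p' i ≤ ftrlObj n η ν D q + ∑ i, dhat i * q i) :
    ∀ i, p' i ≤ 2 * p i := by
  have hν0 : 0 < ν := by rw [hν]; norm_num
  have hK : 1 / ν = (16:ℝ) := by rw [hν]; norm_num
  have hppos : ∀ i, 0 < p i := fun i => lt_of_lt_of_le hε (hp.2 i)
  have hp'pos : ∀ i, 0 < p' i := fun i => lt_of_lt_of_le hε (hp'.2 i)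
  -- gradient conditions
  have hA : 0 ≤ ∑ i, (D i + (1/η) * (Real.log (p i) + 1) - (1/ν) * (1 / p i)) * (p' i - p i) :=
    grad_cond n ε η ν hε hη hν0 D p hp (fun q hq => by simpa [ftrlObj] using hpmin q hq) p' hp'
  have hB : 0 ≤ ∑ i, ((D i + dhat i) + (1/η) * (Real.log (p' i) + 1) - (1/ν) * (1 / p' i)) * (p i - p' i) := by
    refine grad_cond n ε η ν hε hη hν0 (fun i => D i + dhat i) p' hp' (fun q hq => ?_) p hp
    have := hp'min q hq
    simp only [ftrlObj] at this
    simp only [add_mul, Finset.sum_add_distrib]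
    linarith
  -- key inequality
  set T : Fin n → ℝ := fun i => 16 * ((p' i - p i)^2 / (p i * p' i)) with hT
  have hTnonneg : ∀ i, 0 ≤ T i := fun i => by
    have := hppos i; have := hp'pos i; positivity
  have hKI : ∑ i, T i ≤ ∑ i, dhat i * (p i - p' i) := by
    have hAB : 0 ≤ ∑ i, ((D i + (1/η) * (Real.log (p i) + 1) - (1/ν) * (1 / p i)) * (p' i - p i)
        + ((D i + dhat i) + (1/η) * (Real.log (p' i) + 1) - (1/ν) * (1 / p' i)) * (p i - p' i)) := by
      rw [Finset.sum_add_distrib]; linarith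
    have heq : ∀ i, (D i + (1/η) * (Real.log (p i) + 1) - (1/ν) * (1 / p i)) * (p' i - p i)
        + ((D i + dhat i) + (1/η) * (Real.log (p' i) + 1) - (1/ν) * (1 / p' i)) * (p i - p' i)
        = dhat i * (p i - p' i)
          - (1/η) * ((Real.log (p' i) - Real.log (p i)) * (p' i - p i))
          - T i := by
      intro i
      have h1 : p i ≠ 0 := (hppos i).ne'
      have h2 : p' i ≠ 0 := (hp'pos i).ne'
      rw [hT, hK]
      field_simp
      ring
    rw [Finset.sum_congr rfl (fun i _ => heq i)] at hAB
    have hlog : ∀ i, 0 ≤ (1/η) * ((Real.log (p' i) - Real.log (p i)) * (p' i - p i)) := by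
      intro i
      have hη' : 0 ≤ 1/η := by positivity
      rcases le_total (p i) (p' i) with h | h
      · have := Real.log_le_log (hppos i) h
        exact mul_nonneg hη' (mul_nonneg (by linarith) (by linarith))
      · have := Real.log_le_log (hp'pos i) h
        exact mul_nonneg hη' (by nlinarith)
    have hsplit : ∑ i, (dhat i * (p i - p' i)
          - (1/η) * ((Real.log (p' i) - Real.log (p i)) * (p' i - p i)) - T i)
        = ∑ i, dhat i * (p i - p' i)
          - ∑ i, (1/η) * ((Real.log (p' i) - Real.log (p i)) * (p' i - p i))
          - ∑ i, T i := by
      rw [Finset.sum_sub_distrib, Finset.sum_sub_distrib]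
    rw [hsplit] at hAB
    have := Finset.sum_nonneg (fun i (_ : i ∈ univ) => hlog i)
    linarith
  -- main argument
  intro i₀
  by_contra hcon
  push_neg at hcon
  have ha0 : 0 < p i₀ := hppos i₀
  have hb0 : 0 < p' i₀ := hp'pos i₀
  have hT8 : 8 < T i₀ := aux_T8 (p i₀) (p' i₀) ha0 hcon
  rcases hdhat with h0 | ⟨hRne, hdef⟩
  · have hz : ∑ i, dhat i * (p i - p' i) = 0 := by
      rw [h0]; simp
    have := Finset.single_le_sum (fun i (_ : i ∈ univ) => hTnonneg i) (Finset.mem_univ i₀)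
    linarith
  · set q₀ := ∑ j ∈ R, p j with hq₀def
    have hq₀ : 0 < q₀ := Finset.sum_pos (fun j _ => hppos j) hRne
    have hRHS : ∑ i, dhat i * (p i - p' i) = ∑ i ∈ R, (y/q₀) * (p i - p' i) := by
      rw [hdef]
      rw [← Finset.sum_subset (Finset.subset_univ R)
        (fun x _ hx => by simp [hx])]
      exact Finset.sum_congr rfl fun i hi => by simp [hi]
    rcases hy with hy1 | hy1
    · -- y = -1
      subst hy1
      have hRHS2 : ∑ i ∈ R, ((-1:ℝ)/q₀) * (p i - p' i) = ∑ i ∈ R, ((p' i - p i)/q₀) := by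
        refine Finset.sum_congr rfl fun i _ => ?_
        field_simp
        ring
      have claim1 : ∀ i ∈ R, (p' i - p i)/q₀ - T i ≤ p i / (15 * q₀) := by
        intro i hi
        have hle : p i ≤ q₀ := Finset.single_le_sum (fun j _ => (hppos j).le) hi
        exact aux_claim1 (p i) (p' i) q₀ (hppos i) (hp'pos i) hq₀ hle
      have hsum1 : ∑ i ∈ R, ((p' i - p i)/q₀ - T i) ≤ ∑ i ∈ R, p i / (15 * q₀) :=
        Finset.sum_le_sum claim1
      have hsum2 : ∑ i ∈ R, p i / (15 * q₀) = 1/15 := by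
        rw [← Finset.sum_div, ← hq₀def]
        field_simp
      have hsum3 : ∑ i ∈ R, ((p' i - p i)/q₀ - T i)
          = ∑ i ∈ R, (p' i - p i)/q₀ - ∑ i ∈ R, T i := Finset.sum_sub_distrib _ _
      by_cases hmem : i₀ ∈ R
      · have hle : p i₀ ≤ q₀ := Finset.single_le_sum (fun j _ => (hppos j).le) hmem
        have hstrong : (p' i₀ - p i₀)/q₀ - T i₀ ≤ -7 :=
          aux_strong (p i₀) (p' i₀) q₀ ha0 hcon hle
        have hErase : ∑ i ∈ R.erase i₀, ((p' i - p i)/q₀ - T i) ≤ 1/15 := by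
          have h1 : ∑ i ∈ R.erase i₀, ((p' i - p i)/q₀ - T i) ≤ ∑ i ∈ R.erase i₀, p i / (15 * q₀) :=
            Finset.sum_le_sum (fun i hi => claim1 i (Finset.mem_of_mem_erase hi))
          have h2 : ∑ i ∈ R.erase i₀, p i / (15 * q₀) ≤ ∑ i ∈ R, p i / (15 * q₀) :=
            Finset.sum_le_sum_of_subset_of_nonneg (Finset.erase_subset _ _)
              (fun i _ _ => by have := hppos i; positivity)
          linarith [hsum2]
        have hsplit : ((p' i₀ - p i₀)/q₀ - T i₀) + ∑ i ∈ R.erase i₀, ((p' i - p i)/q₀ - T i)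
            = ∑ i ∈ R, ((p' i - p i)/q₀ - T i) :=
          Finset.add_sum_erase R (fun i => (p' i - p i)/q₀ - T i) hmem
        have hTfull : ∑ i ∈ R, T i ≤ ∑ i, T i :=
          Finset.sum_le_sum_of_subset_of_nonneg (Finset.subset_univ R)
            (fun i _ _ => hTnonneg i)
        rw [hRHS, hRHS2] at hKI
        rw [hsum3] at hsplit
        linarith
      · have hTfull : T i₀ + ∑ i ∈ R, T i ≤ ∑ i, T i := by
          have h1 : ∑ i ∈ insert i₀ R, T i ≤ ∑ i, T i :=
            Finset.sum_le_sum_of_subset_of_nonneg (Finset.subset_univ _)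
              (fun i _ _ => hTnonneg i)
          rwa [Finset.sum_insert hmem] at h1
        rw [hRHS, hRHS2] at hKI
        rw [hsum3] at hsum1
        linarith
    · -- y = 1
      subst hy1
      have hs' : 0 ≤ ∑ i ∈ R, p' i := Finset.sum_nonneg (fun i _ => (hp'pos i).le)
      have hRHS2 : ∑ i ∈ R, ((1:ℝ)/q₀) * (p i - p' i) = (q₀ - ∑ i ∈ R, p' i)/q₀ := by
        rw [← Finset.mul_sum, Finset.sum_sub_distrib, ← hq₀def]
        field_simp
      have hle1 : (q₀ - ∑ i ∈ R, p' i)/q₀ ≤ 1 := by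
        rw [div_le_one hq₀]
        linarith
      have := Finset.single_le_sum (fun i (_ : i ∈ univ) => hTnonneg i) (Finset.mem_univ i₀)
      rw [hRHS, hRHS2] at hKI
      linarith
end

section
/- Let n and T be real numbers with n ≥ 2 and T ≥ 1. Define L := log n, s := √(T·L), A := min(T, max(min(n, T), s)), and B := min(T, min(n + s, √n · s)). Then (1/2)·A ≤ B ≤ 2·A. Consequently, max(√(T·log n), min(n, T)) and min(√(T·log n) + n, √(T·n·log n)) agree up to a factor of 2 (after capping both at T). -/
theorem stmt18 (n T : ℝ) (hn : 2 ≤ n) (hT : 1 ≤ T) :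
    let L := Real.log n
    let s := Real.sqrt (T * L)
    let A := min T (max (min n T) s)
    let B := min T (min (n + s) (Real.sqrt n * s))
    (1 / 2) * A ≤ B ∧ B ≤ 2 * A := by
  intro L s A B
  have hL : (1:ℝ)/4 ≤ L := by
    have h2 : Real.log 2 ≤ Real.log n := Real.log_le_log (by norm_num) hn
    have := Real.log_two_gt_d9
    simp only [L]; linarith
  have hTL : (0:ℝ) ≤ T * L := by nlinarith
  have hu0 : 0 ≤ s := Real.sqrt_nonneg _
  have hu2 : s ^ 2 = T * L := Real.sq_sqrt hTL
  have hv0 : 0 ≤ Real.sqrt n := Real.sqrt_nonneg _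
  have hv2 : Real.sqrt n ^ 2 = n := Real.sq_sqrt (by linarith)
  have hv1 : 1 ≤ Real.sqrt n := by nlinarith
  have hm0 : 0 ≤ min n T := le_min (by linarith) (by linarith)
  have hA0 : 0 ≤ A := le_min (by linarith) (le_trans hm0 (le_max_left _ _))
  have hAT : A ≤ T := min_le_left _ _
  have hB1 : B ≤ T := min_le_left _ _
  have hB2 : B ≤ n + s := le_trans (min_le_right _ _) (min_le_left _ _)
  constructor
  · refine le_min (by linarith) (le_min ?_ ?_)
    · have h1 : A ≤ max (min n T) s := min_le_right _ _
      have h2 : max (min n T) s ≤ n + s :=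
        max_le (by linarith [min_le_left n T]) (by linarith)
      linarith
    · rcases le_total (min n T) s with h | h
      · have h1 : A ≤ s := le_trans (min_le_right _ _) (by simp [max_eq_right h])
        nlinarith
      · have h1 : A ≤ min n T := le_trans (min_le_right _ _) (by simp [max_eq_left h])
        have hmn : min n T ≤ n := min_le_left _ _
        have hmT : min n T ≤ T := min_le_right _ _
        have hmsq : min n T * min n T ≤ n * T := mul_le_mul hmn hmT hm0 (by linarith)
        have hsq : (min n T) ^ 2 ≤ (2 * Real.sqrt n * s) ^ 2 := by
          nlinarith [mul_nonneg (mul_nonneg (show (0:ℝ) ≤ n by linarith)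
            (show (0:ℝ) ≤ T by linarith)) (show (0:ℝ) ≤ 4*L-1 by linarith)]
        have h2vu : 0 ≤ 2 * Real.sqrt n * s := by positivity
        nlinarith
  · rcases le_total T n with h | h
    · have hA : A = T := by
        have h0 : min n T = T := min_eq_right h
        show min T (max (min n T) s) = T
        rw [min_eq_left]; rw [h0]; exact le_max_left _ _
      rw [hA]; linarith
    · have hmin : min n T = n := min_eq_left h
      rcases le_total T (max n s) with h2 | h2
      · have hA : A = T := by
          show min T (max (min n T) s) = T
          rw [min_eq_left]; rw [hmin]; exact h2
        rw [hA]; linarith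
      · have hA : A = max n s := by
          show min T (max (min n T) s) = max n s
          rw [hmin]; exact min_eq_right h2
        have h3 : n ≤ max n s := le_max_left _ _
        have h4 : s ≤ max n s := le_max_right _ _
        rw [hA]; linarith
end
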